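/- Let G be a {K4, W5, fork}-free graph containing an induced 5-cycle H with vertices v1,...,v5 (indices mod 5), where every vertex outside H has either exactly two consecutive neighbors or exactly three pairwise nonconsecutive neighbors on H. Let U_i be the outside vertices adjacent to v_{i+2} and v_{i+3}, and U_i^+ = U_i ∩ N(v_i). If U_i^+ is nonempty, then at least one of U_{i+2} and U_{i-2} is empty. -/

import Mathlib

open SimpleGraph

/-- `v` enumerates the vertices of an induced cycle of length `n` in `G`:
`v` is injective and two listed vertices are adjacent iff they are consecutive. -/
def IsInducedCycle {V : Type*} (G : SimpleGraph V) (n : ℕ) (v : ZMod n → V) : Prop :=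
  3 ≤ n ∧ Function.Injective v ∧
    ∀ i j : ZMod n, G.Adj (v i) (v j) ↔ (j = i + 1 ∨ i = j + 1)

/-- An odd hole: an induced odd cycle of length at least 5. -/
def IsOddHole {V : Type*} (G : SimpleGraph V) (n : ℕ) (v : ZMod n → V) : Prop :=
  5 ≤ n ∧ Odd n ∧ IsInducedCycle G n v

/-- `G` contains an induced fork (chair): the tree on `{c,x,y,z,w}` with
edges `cx, cy, cz, zw`. -/
def HasInducedFork {V : Type*} (G : SimpleGraph V) : Prop :=
  ∃ c x y z w : V, ([c, x, y, z, w] : List V).Nodup ∧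
    G.Adj c x ∧ G.Adj c y ∧ G.Adj c z ∧ G.Adj z w ∧
    ¬G.Adj x y ∧ ¬G.Adj x z ∧ ¬G.Adj y z ∧ ¬G.Adj c w ∧ ¬G.Adj x w ∧ ¬G.Adj y w

/-- `G` contains an induced claw `K_{1,3}`. -/
def HasInducedClaw {V : Type*} (G : SimpleGraph V) : Prop :=
  ∃ c x y z : V, ([c, x, y, z] : List V).Nodup ∧
    G.Adj c x ∧ G.Adj c y ∧ G.Adj c z ∧ ¬G.Adj x y ∧ ¬G.Adj x z ∧ ¬G.Adj y z

/-- `G` contains an induced `W₅`: an induced 5-cycle plus a vertex adjacent to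
all five cycle vertices. -/
def HasInducedW5 {V : Type*} (G : SimpleGraph V) : Prop :=
  ∃ (u : ZMod 5 → V) (h : V), Function.Injective u ∧ (∀ i, h ≠ u i) ∧
    (∀ i j : ZMod 5, G.Adj (u i) (u j) ↔ (j = i + 1 ∨ i = j + 1)) ∧
    ∀ i, G.Adj h (u i)

/-- `S` is an independent set of `G`. -/
def IsIS {V : Type*} (G : SimpleGraph V) (S : Set V) : Prop :=
  ∀ ⦃a⦄, a ∈ S → ∀ ⦃b⦄, b ∈ S → ¬G.Adj a b

/-- `S` is a maximal independent set of `G`. -/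
def MaxIS {V : Type*} (G : SimpleGraph V) (S : Set V) : Prop :=
  IsIS G S ∧ ∀ T, IsIS G T → S ⊆ T → T = S

/-- A vertex `u` outside an (induced) 5-cycle `v` has either exactly two consecutive
neighbors on the cycle, or exactly three neighbors that are not three consecutive
vertices (the only such pattern on a 5-cycle being `{i, i+1, i+3}`). -/
def GoodAttach {V : Type*} (G : SimpleGraph V) (v : ZMod 5 → V) (u : V) : Prop :=
  (∃ i : ZMod 5, ∀ k, G.Adj u (v k) ↔ (k = i ∨ k = i + 1)) ∨
  (∃ i : ZMod 5, ∀ k, G.Adj u (v k) ↔ (k = i ∨ k = i + 1 ∨ k = i + 3))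

/-- `U_i`: the vertices outside the 5-cycle adjacent to both `v_{i+2}` and `v_{i+3}`. -/
def Uset {V : Type*} (G : SimpleGraph V) (v : ZMod 5 → V) (i : ZMod 5) : Set V :=
  {u | u ∉ Set.range v ∧ G.Adj u (v (i + 2)) ∧ G.Adj u (v (i + 3))}

/-- `U_i⁺ = U_i ∩ N(v_i)`. -/
def UsetP {V : Type*} (G : SimpleGraph V) (v : ZMod 5 → V) (i : ZMod 5) : Set V :=
  {u | u ∈ Uset G v i ∧ G.Adj u (v i)}

/-- `U_i⁻ = U_i \ N(v_i)`. -/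
def UsetM {V : Type*} (G : SimpleGraph V) (v : ZMod 5 → V) (i : ZMod 5) : Set V :=
  {u | u ∈ Uset G v i ∧ ¬G.Adj u (v i)}


private lemma attach_profile {V : Type*} (G : SimpleGraph V) (v : ZMod 5 → V)
    (hstar : ∀ u : V, u ∉ Set.range v → GoodAttach G v u)
    (x : V) (hx : x ∉ Set.range v) (c : ZMod 5)
    (h1 : G.Adj x (v c)) (h2 : G.Adj x (v (c + 1))) :
    (∀ k, G.Adj x (v k) ↔ (k = c ∨ k = c + 1)) ∨
      (∀ k, G.Adj x (v k) ↔ (k = c ∨ k = c + 1 ∨ k = c + 3)) := by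
  rcases hstar x hx with ⟨j, hj⟩ | ⟨j, hj⟩
  · left
    have e0 := (hj c).mp h1
    have e1 := (hj (c + 1)).mp h2
    have hjc : j = c := by
      rcases e0 with h1' | h1'
      · exact h1'.symm
      rcases e1 with h2' | h2'
      · exact absurd (show (2 : ZMod 5) = 0 by linear_combination h2' - h1') (by decide)
      · exact absurd (show (2 : ZMod 5) = 1 by linear_combination h2' - h1') (by decide)
    subst hjc; exact hj
  · right
    have e0 := (hj c).mp h1
    have e1 := (hj (c + 1)).mp h2
    have hjc : j = c := by
      rcases e0 with h1' | h1' | h1'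
      · exact h1'.symm
      · rcases e1 with h2' | h2' | h2'
        · exact absurd (show (2 : ZMod 5) = 0 by linear_combination h2' - h1') (by decide)
        · exact absurd (show (2 : ZMod 5) = 1 by linear_combination h2' - h1') (by decide)
        · exact absurd (show (2 : ZMod 5) = 3 by linear_combination h2' - h1') (by decide)
      · rcases e1 with h2' | h2' | h2'
        · exact absurd (show (4 : ZMod 5) = 0 by linear_combination h2' - h1') (by decide)
        · exact absurd (show (4 : ZMod 5) = 1 by linear_combination h2' - h1') (by decide)
        · exact absurd (show (4 : ZMod 5) = 3 by linear_combination h2' - h1') (by decide)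
    subst hjc; exact hj

private lemma key7 {V : Type*} (G : SimpleGraph V) (hK4 : G.CliqueFree 4)
    (hW5 : ¬HasInducedW5 G) (hfork : ¬HasInducedFork G)
    (v : ZMod 5 → V) (hH : IsInducedCycle G 5 v)
    (hstar : ∀ u : V, u ∉ Set.range v → GoodAttach G v u)
    (hne : (UsetP G v 0).Nonempty) :
    Uset G v 2 = ∅ ∨ Uset G v 3 = ∅ := by
  obtain ⟨-, hInj, hAdj⟩ := hH
  obtain ⟨u, hu⟩ := hne
  simp only [UsetP, Uset, Set.mem_setOf_eq] at hu
  obtain ⟨⟨hu_nr, hu2, hu3⟩, hu0⟩ := hu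
  rw [show ((0:ZMod 5) + 2) = 2 by decide] at hu2
  rw [show ((0:ZMod 5) + 3) = 3 by decide] at hu3
  by_contra hcon
  push_neg at hcon
  obtain ⟨hA, hB⟩ := hcon
  obtain ⟨a, ha⟩ := hA
  obtain ⟨b, hb⟩ := hB
  simp only [Uset, Set.mem_setOf_eq] at ha hb
  obtain ⟨ha_nr, ha4, ha0⟩ := ha
  obtain ⟨hb_nr, hb0, hb1⟩ := hb
  rw [show ((2:ZMod 5) + 2) = 4 by decide] at ha4
  rw [show ((2:ZMod 5) + 3) = 0 by decide] at ha0
  rw [show ((3:ZMod 5) + 2) = 0 by decide] at hb0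
  rw [show ((3:ZMod 5) + 3) = 1 by decide] at hb1
  -- neighbourhood profiles
  have Pu : ∀ k, G.Adj u (v k) ↔ (k = 2 ∨ k = 2 + 1 ∨ k = 2 + 3) := by
    rcases attach_profile G v hstar u hu_nr 2 hu2
        (by rw [show ((2:ZMod 5)+1) = 3 by decide]; exact hu3) with h | h
    · exact absurd ((h 0).mp hu0) (by decide)
    · exact h
  have Pa := attach_profile G v hstar a ha_nr 4 ha4
      (by rw [show ((4:ZMod 5)+1) = 0 by decide]; exact ha0)
  have Pb := attach_profile G v hstar b hb_nr 0 hb0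
      (by rw [show ((0:ZMod 5)+1) = 1 by decide]; exact hb1)
  have nu1 : ¬G.Adj u (v 1) := fun h => absurd ((Pu 1).mp h) (by decide)
  have nu4 : ¬G.Adj u (v 4) := fun h => absurd ((Pu 4).mp h) (by decide)
  have na1 : ¬G.Adj a (v 1) := by
    rcases Pa with h | h <;> exact fun hh => absurd ((h 1).mp hh) (by decide)
  have na3 : ¬G.Adj a (v 3) := by
    rcases Pa with h | h <;> exact fun hh => absurd ((h 3).mp hh) (by decide)
  have nb2 : ¬G.Adj b (v 2) := by
    rcases Pb with h | h <;> exact fun hh => absurd ((h 2).mp hh) (by decide)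
  have nb4 : ¬G.Adj b (v 4) := by
    rcases Pb with h | h <;> exact fun hh => absurd ((h 4).mp hh) (by decide)
  -- cycle edges and nonedges
  have adj01 : G.Adj (v 0) (v 1) := (hAdj 0 1).mpr (by decide)
  have adj04 : G.Adj (v 0) (v 4) := (hAdj 0 4).mpr (by decide)
  have adj23 : G.Adj (v 2) (v 3) := (hAdj 2 3).mpr (by decide)
  have nadj02 : ¬G.Adj (v 0) (v 2) := fun h => absurd ((hAdj 0 2).mp h) (by decide)
  have nadj03 : ¬G.Adj (v 0) (v 3) := fun h => absurd ((hAdj 0 3).mp h) (by decide)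
  have nadj13 : ¬G.Adj (v 1) (v 3) := fun h => absurd ((hAdj 1 3).mp h) (by decide)
  have nadj24 : ¬G.Adj (v 2) (v 4) := fun h => absurd ((hAdj 2 4).mp h) (by decide)
  have nadj31 : ¬G.Adj (v 3) (v 1) := fun h => nadj13 h.symm
  -- distinctness facts
  have huv : ∀ k, u ≠ v k := fun k h => hu_nr ⟨k, h.symm⟩
  have hav : ∀ k, a ≠ v k := fun k h => ha_nr ⟨k, h.symm⟩
  have hbv : ∀ k, b ≠ v k := fun k h => hb_nr ⟨k, h.symm⟩
  have hvu : ∀ k, v k ≠ u := fun k => (huv k).symm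
  have hva : ∀ k, v k ≠ a := fun k => (hav k).symm
  have hvb : ∀ k, v k ≠ b := fun k => (hbv k).symm
  have nua : u ≠ a := fun h => na3 (by rw [← h]; exact hu3)
  have nub : u ≠ b := fun h => nb2 (by rw [← h]; exact hu2)
  have nab : a ≠ b := fun h => nb4 (by rw [← h]; exact ha4)
  have nau : a ≠ u := nua.symm
  have nbu : b ≠ u := nub.symm
  have nba : b ≠ a := nab.symm
  -- Step A : u is adjacent to a
  have hua : G.Adj u a := by
    by_contra hn
    refine hfork ⟨v 0, v 1, a, u, v 3, ?_, adj01, ha0.symm, hu0.symm, hu3,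
      fun h => na1 h.symm, fun h => nu1 h.symm, fun h => hn h.symm,
      nadj03, nadj13, na3⟩
    simp only [List.nodup_cons, List.mem_cons, List.not_mem_nil, or_false, not_or,
      List.nodup_nil, and_true, not_false_eq_true]
    exact ⟨⟨hInj.ne (by decide), hva 0, hvu 0, hInj.ne (by decide)⟩,
      ⟨hva 1, hvu 1, hInj.ne (by decide)⟩, ⟨nau, hav 3⟩, huv 3⟩
  -- Step B : u is adjacent to b
  have hub : G.Adj u b := by
    by_contra hn
    refine hfork ⟨v 0, v 4, b, u, v 2, ?_, adj04, hb0.symm, hu0.symm, hu2,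
      fun h => nb4 h.symm, fun h => nu4 h.symm, fun h => hn h.symm,
      nadj02, fun h => nadj24 h.symm, nb2⟩
    simp only [List.nodup_cons, List.mem_cons, List.not_mem_nil, or_false, not_or,
      List.nodup_nil, and_true, not_false_eq_true]
    exact ⟨⟨hInj.ne (by decide), hvb 0, hvu 0, hInj.ne (by decide)⟩,
      ⟨hvb 4, hvu 4, hInj.ne (by decide)⟩, ⟨nbu, hbv 2⟩, huv 2⟩
  -- Step C : a and b are not adjacent (else K4 on {v0,u,a,b})
  have hnab : ¬G.Adj a b := by
    intro hab
    classical
    refine hK4 {v 0, u, a, b} ⟨?_, ?_⟩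
    · rintro x hx y hy hxy
      simp only [Finset.coe_insert, Set.mem_insert_iff, Finset.coe_singleton,
        Set.mem_singleton_iff] at hx hy
      rcases hx with rfl | rfl | rfl | rfl <;> rcases hy with rfl | rfl | rfl | rfl <;>
        first
          | exact absurd rfl hxy
          | exact hu0.symm
          | exact hu0
          | exact ha0.symm
          | exact ha0
          | exact hb0.symm
          | exact hb0
          | exact hua
          | exact hua.symm
          | exact hub
          | exact hub.symm
          | exact hab
          | exact hab.symm
    · have h1 : a ∉ ({b} : Finset V) := by simp [nab]
      have h2 : u ∉ ({a, b} : Finset V) := by simp [nua, nub]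
      have h3 : v 0 ∉ ({u, a, b} : Finset V) := by simp [hvu 0, hva 0, hvb 0]
      rw [Finset.card_insert_of_notMem h3, Finset.card_insert_of_notMem h2,
        Finset.card_insert_of_notMem h1, Finset.card_singleton]
  -- case analysis
  rcases Pa with hPa | hPa
  · -- a has only two neighbours on the cycle: fork (u; v2, b, a-v4)
    have na2 : ¬G.Adj a (v 2) := fun h => absurd ((hPa 2).mp h) (by decide)
    refine hfork ⟨u, v 2, b, a, v 4, ?_, hu2, hub, hua, ha4,
      fun h => nb2 h.symm, fun h => na2 h.symm, fun h => hnab h.symm,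
      nu4, nadj24, nb4⟩
    simp only [List.nodup_cons, List.mem_cons, List.not_mem_nil, or_false, not_or,
      List.nodup_nil, and_true, not_false_eq_true]
    exact ⟨⟨huv 2, nub, nua, huv 4⟩, ⟨hvb 2, hva 2, hInj.ne (by decide)⟩,
      ⟨nba, hbv 4⟩, hav 4⟩
  rcases Pb with hPb | hPb
  · -- b has only two neighbours on the cycle: fork (u; v3, a, b-v1)
    have nb3 : ¬G.Adj b (v 3) := fun h => absurd ((hPb 3).mp h) (by decide)
    refine hfork ⟨u, v 3, a, b, v 1, ?_, hu3, hua, hub, hb1,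
      fun h => na3 h.symm, fun h => nb3 h.symm, hnab, nu1, nadj31, na1⟩
    simp only [List.nodup_cons, List.mem_cons, List.not_mem_nil, or_false, not_or,
      List.nodup_nil, and_true, not_false_eq_true]
    exact ⟨⟨huv 3, nua, nub, huv 1⟩, ⟨hva 3, hvb 3, hInj.ne (by decide)⟩,
      ⟨nab, hav 1⟩, hbv 1⟩
  · -- both a and b have three neighbours: W5 with hub u
    have pa2 : G.Adj a (v 2) := (hPa 2).mpr (by decide)
    have pb3 : G.Adj b (v 3) := (hPb 3).mpr (by decide)
    apply hW5
    have hcases : ∀ x : ZMod 5, x = 0 ∨ x = 1 ∨ x = 2 ∨ x = 3 ∨ x = 4 := by decide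
    obtain ⟨f, f0, f1, f2, f3, f4⟩ : ∃ f : ZMod 5 → V,
        f 0 = v 0 ∧ f 1 = a ∧ f 2 = v 2 ∧ f 3 = v 3 ∧ f 4 = b := by
      refine ⟨fun k => if k = 0 then v 0 else if k = 1 then a else if k = 2 then v 2
        else if k = 3 then v 3 else b, ?_, ?_, ?_, ?_, ?_⟩ <;>
        simp only [if_pos, if_neg, show ((1:ZMod 5) ≠ 0) by decide,
          show ((2:ZMod 5) ≠ 0) by decide, show ((2:ZMod 5) ≠ 1) by decide,
          show ((3:ZMod 5) ≠ 0) by decide, show ((3:ZMod 5) ≠ 1) by decide,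
          show ((3:ZMod 5) ≠ 2) by decide, show ((4:ZMod 5) ≠ 0) by decide,
          show ((4:ZMod 5) ≠ 1) by decide, show ((4:ZMod 5) ≠ 2) by decide,
          show ((4:ZMod 5) ≠ 3) by decide, ite_true, ite_false, if_true, if_false]
    refine ⟨f, u, ?_, ?_, ?_, ?_⟩
    · intro x y h
      rcases hcases x with rfl | rfl | rfl | rfl | rfl <;>
        rcases hcases y with rfl | rfl | rfl | rfl | rfl <;>
        simp only [f0, f1, f2, f3, f4] at h <;>
        first
          | rfl
          | exact absurd h (hInj.ne (by decide))
          | exact absurd h (hva _)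
          | exact absurd h (hav _)
          | exact absurd h (hvb _)
          | exact absurd h (hbv _)
          | exact absurd h nab
          | exact absurd h nba
    · intro k
      rcases hcases k with rfl | rfl | rfl | rfl | rfl <;>
        simp only [f0, f1, f2, f3, f4] <;>
        first
          | exact huv _
          | exact nua
          | exact nub
    · intro x y
      rcases hcases x with rfl | rfl | rfl | rfl | rfl <;>
        rcases hcases y with rfl | rfl | rfl | rfl | rfl <;>
        simp only [f0, f1, f2, f3, f4] <;>
        first
          | exact iff_of_false G.irrefl (by decide)
          | exact iff_of_true ha0.symm (by decide)
          | exact iff_of_true ha0 (by decide)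
          | exact iff_of_true pa2 (by decide)
          | exact iff_of_true pa2.symm (by decide)
          | exact iff_of_true adj23 (by decide)
          | exact iff_of_true adj23.symm (by decide)
          | exact iff_of_true pb3 (by decide)
          | exact iff_of_true pb3.symm (by decide)
          | exact iff_of_true hb0 (by decide)
          | exact iff_of_true hb0.symm (by decide)
          | exact iff_of_false nadj02 (by decide)
          | exact iff_of_false (fun hh => nadj02 hh.symm) (by decide)
          | exact iff_of_false nadj03 (by decide)
          | exact iff_of_false (fun hh => nadj03 hh.symm) (by decide)
          | exact iff_of_false na3 (by decide)
          | exact iff_of_false (fun hh => na3 hh.symm) (by decide)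
          | exact iff_of_false hnab (by decide)
          | exact iff_of_false (fun hh => hnab hh.symm) (by decide)
          | exact iff_of_false nb2 (by decide)
          | exact iff_of_false (fun hh => nb2 hh.symm) (by decide)
    · intro k
      rcases hcases k with rfl | rfl | rfl | rfl | rfl <;>
        simp only [f0, f1, f2, f3, f4] <;>
        first
          | exact hu0
          | exact hua
          | exact hu2
          | exact hu3
          | exact hub

theorem stmt7 {V : Type*} (G : SimpleGraph V) (hK4 : G.CliqueFree 4)
    (hW5 : ¬HasInducedW5 G) (hfork : ¬HasInducedFork G)
    (v : ZMod 5 → V) (hH : IsInducedCycle G 5 v)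
    (hstar : ∀ u : V, u ∉ Set.range v → GoodAttach G v u)
    (i : ZMod 5) (hne : (UsetP G v i).Nonempty) :
    Uset G v (i + 2) = ∅ ∨ Uset G v (i - 2) = ∅ := by
  obtain ⟨w, hw⟩ : ∃ w : ZMod 5 → V, ∀ k, w k = v (i + k) := ⟨_, fun _ => rfl⟩
  obtain ⟨h3, hInj, hAdj⟩ := hH
  have hrange : Set.range w = Set.range v := by
    ext x
    constructor
    · rintro ⟨k, rfl⟩; exact ⟨i + k, (hw k).symm⟩
    · rintro ⟨k, rfl⟩
      exact ⟨k - i, by rw [hw]; exact congrArg v (by ring)⟩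
  have hHw : IsInducedCycle G 5 w := by
    refine ⟨h3, ?_, ?_⟩
    · intro x y h
      rw [hw, hw] at h
      have h' := hInj h
      linear_combination h'
    · intro p q
      rw [hw, hw, hAdj (i + p) (i + q)]
      constructor
      · rintro (h | h)
        · exact Or.inl (by linear_combination h)
        · exact Or.inr (by linear_combination h)
      · rintro (h | h)
        · exact Or.inl (by linear_combination h)
        · exact Or.inr (by linear_combination h)
  have hstarw : ∀ x : V, x ∉ Set.range w → GoodAttach G w x := by
    intro x hx
    rw [hrange] at hx
    rcases hstar x hx with ⟨j, hj⟩ | ⟨j, hj⟩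
    · left
      refine ⟨j - i, fun k => ?_⟩
      rw [hw, hj (i + k)]
      constructor
      · rintro (h | h)
        · exact Or.inl (by linear_combination h)
        · exact Or.inr (by linear_combination h)
      · rintro (h | h)
        · exact Or.inl (by linear_combination h)
        · exact Or.inr (by linear_combination h)
    · right
      refine ⟨j - i, fun k => ?_⟩
      rw [hw, hj (i + k)]
      constructor
      · rintro (h | h | h)
        · exact Or.inl (by linear_combination h)
        · exact Or.inr (Or.inl (by linear_combination h))
        · exact Or.inr (Or.inr (by linear_combination h))
      · rintro (h | h | h)
        · exact Or.inl (by linear_combination h)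
        · exact Or.inr (Or.inl (by linear_combination h))
        · exact Or.inr (Or.inr (by linear_combination h))
  have hUeq : ∀ c : ZMod 5, Uset G v (i + c) = Uset G w c := by
    intro c
    ext x
    simp only [Uset, Set.mem_setOf_eq, hrange, hw]
    constructor
    · rintro ⟨h1, h2, h3'⟩
      refine ⟨h1, ?_, ?_⟩
      · rw [show i + (c + 2) = i + c + 2 by ring]; exact h2
      · rw [show i + (c + 3) = i + c + 3 by ring]; exact h3'
    · rintro ⟨h1, h2, h3'⟩
      refine ⟨h1, ?_, ?_⟩
      · rw [show i + (c + 2) = i + c + 2 by ring] at h2; exact h2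
      · rw [show i + (c + 3) = i + c + 3 by ring] at h3'; exact h3'
  have hUPeq : UsetP G v i = UsetP G w 0 := by
    ext x
    simp only [UsetP, Uset, Set.mem_setOf_eq, hrange, hw]
    constructor
    · rintro ⟨⟨h1, h2, h3'⟩, h4⟩
      refine ⟨⟨h1, ?_, ?_⟩, ?_⟩
      · rw [show i + (0 + 2) = i + 2 by ring]; exact h2
      · rw [show i + (0 + 3) = i + 3 by ring]; exact h3'
      · rw [show i + 0 = i by ring]; exact h4
    · rintro ⟨⟨h1, h2, h3'⟩, h4⟩
      refine ⟨⟨h1, ?_, ?_⟩, ?_⟩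
      · rw [show i + (0 + 2) = i + 2 by ring] at h2; exact h2
      · rw [show i + (0 + 3) = i + 3 by ring] at h3'; exact h3'
      · rw [show i + 0 = i by ring] at h4; exact h4
  have e : i - 2 = i + 3 := by
    have h5 : (5 : ZMod 5) = 0 := by decide
    linear_combination -h5
  rw [hUeq 2, e, hUeq 3]
  exact key7 G hK4 hW5 hfork w hHw hstarw (hUPeq ▸ hne)
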